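/- Let μ > 0, F ∈ ℝ³, and 0 < a < b. Let u_δ(x) = (1/(8πμ))·(F/|x| + ((x·F)/|x|³)·x) be the 3D Stokeslet velocity, and let χ̃(x) = χ(|x|) with χ(r) = (2r³ − 3(a+b)r² + 6abr + b²(b−3a))/(b−a)³ for a ≤ r ≤ b. Then for every x ∈ ℝ³ with a < |x| < b, writing r = |x|: div(χ̃·u_δ)(x) = [3(r² − (a+b)r + ab) / (2πμ(b−a)³ r²)] · (x·F). -/

import Mathlib

open Real MeasureTheory

noncomputable section

/-- Euclidean inner product on `Fin d → ℝ`. -/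
def dot {d : ℕ} (x y : Fin d → ℝ) : ℝ := ∑ i, x i * y i

/-- Euclidean norm on `Fin d → ℝ`. -/
def eunorm {d : ℕ} (x : Fin d → ℝ) : ℝ := Real.sqrt (∑ i, (x i) ^ 2)

/-- `i`-th partial derivative of a scalar field. -/
def pd {d : ℕ} (i : Fin d) (f : (Fin d → ℝ) → ℝ) (x : Fin d → ℝ) : ℝ :=
  fderiv ℝ f x (Pi.single i 1)

/-- Laplacian (sum of second partial derivatives) of a scalar field. -/
def lap {d : ℕ} (f : (Fin d → ℝ) → ℝ) (x : Fin d → ℝ) : ℝ :=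
  ∑ i, pd i (fun y => pd i f y) x

/-- Divergence of a vector field. -/
def divg {d : ℕ} (u : (Fin d → ℝ) → (Fin d → ℝ)) (x : Fin d → ℝ) : ℝ :=
  ∑ i, pd i (fun y => u y i) x

/-- 3D Stokeslet velocity. -/
def udelta3 (μ : ℝ) (F : Fin 3 → ℝ) (x : Fin 3 → ℝ) : Fin 3 → ℝ :=
  fun j => (1 / (8 * π * μ)) *
    (F j / eunorm x + (dot x F / (eunorm x) ^ 3) * x j)

/-- The radial cubic cutoff profile: `1` for `r ≤ a`, a cubic polynomial on `[a, b]`,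
and `0` for `r ≥ b`. -/
def cutoff (a b r : ℝ) : ℝ :=
  if r ≤ a then 1
  else if r ≤ b then
    (2 * r ^ 3 - 3 * (a + b) * r ^ 2 + 6 * a * b * r + b ^ 2 * (b - 3 * a)) / (b - a) ^ 3
  else 0

abbrev prj (j : Fin 3) : (Fin 3 → ℝ) →L[ℝ] ℝ := ContinuousLinearMap.proj j

/-- Divergence of the truncated 3D Stokeslet velocity `u₀ = χ̃ u_δ` on the annulus
`a < |x| < b`. -/
theorem div_truncated_stokeslet3d (μ : ℝ) (hμ : 0 < μ) (F : Fin 3 → ℝ)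
    (a b : ℝ) (ha : 0 < a) (hab : a < b)
    (x : Fin 3 → ℝ) (hxa : a < eunorm x) (hxb : eunorm x < b) :
    divg (fun y j => cutoff a b (eunorm y) * udelta3 μ F y j) x =
      (3 * ((eunorm x) ^ 2 - (a + b) * eunorm x + a * b) /
        (2 * π * μ * (b - a) ^ 3 * (eunorm x) ^ 2)) * dot x F := by
  have hrdef : eunorm x = eunorm x := rfl
  set r := eunorm x with hrdef
  have hr : 0 < r := ha.trans hxa
  set C : ℝ := 1 / (8 * π * μ) with hC
  set S : ℝ := dot x F with hS0
  set P : ℝ := (2 * r ^ 3 - 3 * (a + b) * r ^ 2 + 6 * a * b * r + b ^ 2 * (b - 3 * a)) / (b - a) ^ 3 with hP0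
  set P' : ℝ := (6 * r ^ 2 - 6 * (a + b) * r + 6 * a * b) / (b - a) ^ 3 with hP'0
  -- basic derivatives
  have hsq : ∀ j : Fin 3, HasFDerivAt (fun y : Fin 3 → ℝ => y j ^ 2)
      ((2 * x j) • prj j) x := by
    intro j
    have := (hasDerivAt_pow 2 (x j)).comp_hasFDerivAt x ((prj j).hasFDerivAt (x := x))
    simpa [Function.comp_def] using this
  have hq : HasFDerivAt (fun y : Fin 3 → ℝ => ∑ j, y j ^ 2)
      (∑ j, (2 * x j) • prj j) x := HasFDerivAt.fun_sum (fun j _ => hsq j)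
  have hqx : (∑ j, (x j) ^ 2) = r ^ 2 := by
    rw [hrdef, eunorm, sq_sqrt]
    positivity
  set Ln : (Fin 3 → ℝ) →L[ℝ] ℝ := (1 / (2 * r)) • (∑ j, (2 * x j) • prj j) with hLn
  have hn : HasFDerivAt (fun y : Fin 3 → ℝ => eunorm y) Ln x := by
    have hs : HasDerivAt Real.sqrt (1/(2*r)) (∑ j, (x j)^2) := by
      have h0 := Real.hasDerivAt_sqrt (x := ∑ j, (x j)^2) (by rw [hqx]; positivity)
      have : Real.sqrt (∑ j, (x j)^2) = r := by rw [hqx, Real.sqrt_sq hr.le]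
      rw [this] at h0
      exact h0
    exact hs.comp_hasFDerivAt x hq
  have hSd : HasFDerivAt (fun y : Fin 3 → ℝ => dot y F)
      (∑ j, (F j) • prj j) x := by
    have : ∀ j : Fin 3, HasFDerivAt (fun y : Fin 3 → ℝ => y j * F j) ((F j) • prj j) x :=
      fun j => ((prj j).hasFDerivAt (x := x)).mul_const (F j)
    exact HasFDerivAt.fun_sum (fun j _ => this j)
  have hinv : HasFDerivAt (fun y : Fin 3 → ℝ => (eunorm y)⁻¹) ((-(r^2)⁻¹) • Ln) x := by
    have h1 : HasDerivAt (fun t : ℝ => t⁻¹) (-(r^2)⁻¹) r := by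
      simpa using hasDerivAt_inv hr.ne'
    exact h1.comp_hasFDerivAt x hn
  have hinv3 : HasFDerivAt (fun y : Fin 3 → ℝ => (eunorm y ^ 3)⁻¹)
      ((3 * (r^2)⁻¹) • ((-(r^2)⁻¹) • Ln)) x := by
    have := (hasDerivAt_pow 3 (r⁻¹)).comp_hasFDerivAt x hinv
    simpa [Function.comp_def, inv_pow] using this
  have hPd : HasDerivAt (fun t : ℝ => (2*t^3 - 3*(a+b)*t^2 + 6*a*b*t + b^2*(b-3*a)) / (b-a)^3)
      P' r := by
    have h1 : HasDerivAt (fun t : ℝ => 2*t^3 - 3*(a+b)*t^2 + 6*a*b*t + b^2*(b-3*a))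
        (6*r^2 - 6*(a+b)*r + 6*a*b) r := by
      have := ((((hasDerivAt_pow 3 r).const_mul 2).sub ((hasDerivAt_pow 2 r).const_mul (3*(a+b)))).add
        ((hasDerivAt_id r).const_mul (6*a*b))).add_const (b^2*(b-3*a))
      convert this using 1
      · rfl
      · ext t; simp only [Pi.add_apply, Pi.sub_apply, id]
      norm_num
      ring
    exact h1.div_const _
  have hPn : HasFDerivAt (fun y : Fin 3 → ℝ =>
      (2*(eunorm y)^3 - 3*(a+b)*(eunorm y)^2 + 6*a*b*(eunorm y) + b^2*(b-3*a)) / (b-a)^3)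
      (P' • Ln) x := by have := hPd.comp_hasFDerivAt x hn; exact this
  -- evaluation of Ln on basis vectors
  have hLni : ∀ i : Fin 3, Ln (Pi.single i 1) = x i / r := by
    intro i
    rw [hLn]
    simp only [ContinuousLinearMap.coe_smul', ContinuousLinearMap.coe_sum', Pi.smul_apply,
      Finset.sum_apply, ContinuousLinearMap.proj_apply, smul_eq_mul, Pi.single_apply, mul_ite,
      mul_one, mul_zero, Finset.sum_ite_eq', Finset.mem_univ, if_true]
    field_simp
  -- eventual equality with the smooth representative
  have hev : ∀ i : Fin 3,
      (fun y : Fin 3 → ℝ => cutoff a b (eunorm y) * udelta3 μ F y i) =ᶠ[nhds x]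
      (fun y : Fin 3 → ℝ =>
        ((2*(eunorm y)^3 - 3*(a+b)*(eunorm y)^2 + 6*a*b*(eunorm y) + b^2*(b-3*a)) / (b-a)^3) *
        (C * (F i * (eunorm y)⁻¹ + dot y F * (eunorm y ^ 3)⁻¹ * y i))) := by
    intro i
    have hcont : Continuous (fun y : Fin 3 → ℝ => eunorm y) := by
      unfold eunorm
      exact (continuous_finset_sum _ fun j _ => (continuous_apply j).pow 2).sqrt
    have hU : (fun y : Fin 3 → ℝ => eunorm y) ⁻¹' Set.Ioo a b ∈ nhds x :=
      (isOpen_Ioo.preimage hcont).mem_nhds ⟨hxa, hxb⟩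
    filter_upwards [hU] with y hy
    obtain ⟨hy1, hy2⟩ := hy
    rw [cutoff, if_neg (not_le.mpr hy1), if_pos hy2.le, udelta3, hC]
    rw [div_eq_mul_inv (F i), div_eq_mul_inv (dot y F)]
  -- the main per-component computation
  have hDi : ∀ i : Fin 3,
      pd i (fun y => cutoff a b (eunorm y) * udelta3 μ F y i) x =
      (C * P' / r^2) * (x i * F i) + (C * S * (P'/r^4 - 3*P/r^5)) * (x i ^ 2) + P * C * S / r^3 := by
    intro i
    have hproj : HasFDerivAt (fun y : Fin 3 → ℝ => y i) (prj i) x := (prj i).hasFDerivAt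
    have hA : HasFDerivAt (fun y : Fin 3 → ℝ => F i * (eunorm y)⁻¹) ((F i) • ((-(r^2)⁻¹) • Ln)) x :=
      hinv.const_mul (F i)
    have hB := (hSd.mul hinv3).mul hproj
    have hsum := (hA.add hB).const_mul C
    have hgi := hPn.mul hsum
    have hfi := hgi.congr_of_eventuallyEq (hev i)
    rw [pd, hfi.fderiv]
    simp only [ContinuousLinearMap.add_apply, ContinuousLinearMap.coe_smul',
      Pi.smul_apply, smul_eq_mul, hLni i, ContinuousLinearMap.coe_sum',
      Finset.sum_apply, ContinuousLinearMap.proj_apply, Pi.single_apply, mul_ite, mul_one,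
      mul_zero, Finset.sum_ite_eq', Finset.mem_univ, if_true, Pi.mul_apply, Pi.add_apply, ← hrdef, ← hS0]
    ring
  -- sum over components
  have hsum3 : divg (fun y j => cutoff a b (eunorm y) * udelta3 μ F y j) x =
      (C * P' / r^2) * S + (C * S * (P'/r^4 - 3*P/r^5)) * r^2 + 3 * (P * C * S / r^3) := by
    rw [divg]
    rw [Finset.sum_congr rfl (fun i _ => hDi i)]
    rw [Finset.sum_add_distrib, Finset.sum_add_distrib, ← Finset.mul_sum, ← Finset.mul_sum,
      hqx, Finset.sum_const]
    have : (∑ i, x i * F i) = S := rfl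
    rw [this]
    simp only [Finset.card_univ, Fintype.card_fin, nsmul_eq_mul, Nat.cast_ofNat]
  rw [hsum3, hC, hP0, hP'0]
  have hπ : (π : ℝ) ≠ 0 := Real.pi_ne_zero
  have hba : b - a ≠ 0 := sub_ne_zero.mpr hab.ne'
  field_simp
  ring
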